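/- Let {Uᵢ}_{i=1,…,d²} be a nice unitary error basis with U₁ = I (after rescaling so each is unitary). Define Mᵢ = Uᵢ/√d. Then for every j, and all indices i,k, the product Mᵢ Mⱼ† M_k equals (1/d) times a unit-phase multiple of some M_l; in particular the rank-1 PVM {|Mᵢ⟩⟩⟨⟨Mᵢ|} on ℂ^d ⊗ ℂ^d is localized by the resource state |Mⱼᵀ⟩⟩⟨⟨Mⱼᵀ| with Alice's and Bob's local PVMs both equal to {|Mᵢ⟩⟩⟨⟨Mᵢ|} and a pattern function f(i,k) = l determined by Mᵢ Mⱼ⁻¹ M_k ∝ M_{f(i,k)}. -/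

import Mathlib

open Matrix

noncomputable section

/-- A family of unitary matrices that is linearly independent: a unitary error basis. -/
def IsUnitaryErrorBasis {d n : ℕ} (U : Fin n → Matrix (Fin d) (Fin d) ℂ) : Prop :=
  (∀ i, (U i)ᴴ * U i = 1) ∧ LinearIndependent ℂ U

/-- A nice error basis: a unitary error basis closed under multiplication up to unit phases. -/
def IsNiceErrorBasis {d n : ℕ} (U : Fin n → Matrix (Fin d) (Fin d) ℂ) : Prop :=
  IsUnitaryErrorBasis U ∧
    ∀ i j, ∃ (c : ℂ) (k : Fin n), ‖c‖ = 1 ∧ U i * U j = c • U k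

/-- For a nice unitary error basis `{Uᵢ}` with `U₁ = I` and `Mᵢ := Uᵢ/√d`: for every `j` and
all `i, k`, the product `Mᵢ Mⱼ† M_k` equals `(1/d)` times a unit-phase multiple of some
`M_l`; in particular the rank-1 PVM `{|Mᵢ⟩⟩⟨⟨Mᵢ|}` on `ℂ^d ⊗ ℂ^d` is localized by the
resource state `|Mⱼᵀ⟩⟩⟨⟨Mⱼᵀ|` with Alice's and Bob's local PVMs both `{|Mᵢ⟩⟩⟨⟨Mᵢ|}`
and a pattern function `f` determined by `Mᵢ (Mⱼᵀ)* M_k = Mᵢ Mⱼ† M_k ∝ M_{f(i,k)}`. -/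
theorem nice_basis_gives_localization {d : ℕ} (hd : 0 < d)
    (U : Fin (d ^ 2) → Matrix (Fin d) (Fin d) ℂ)
    (hnice : IsNiceErrorBasis U)
    (hU1 : U ⟨0, by positivity⟩ = 1)
    (M : Fin (d ^ 2) → Matrix (Fin d) (Fin d) ℂ)
    (hM : M = fun i => ((Real.sqrt d : ℂ))⁻¹ • U i)
    (j : Fin (d ^ 2)) :
    (∀ i k, ∃ (c : ℂ) (l : Fin (d ^ 2)), ‖c‖ = 1 ∧
        M i * (M j)ᴴ * M k = (((d : ℂ))⁻¹ * c) • M l) ∧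
    ∃ f : Fin (d ^ 2) → Fin (d ^ 2) → Fin (d ^ 2),
      ∀ i k, ∃ α : ℂ, M i * ((M j)ᵀ).map star * M k = α • M (f i k) := by
  obtain ⟨⟨hunit, hli⟩, hclose⟩ := hnice
  -- some unit-phase multiple of some `U a` equals `(U j)ᴴ`
  have hz : ∃ (c : ℂ) (a : Fin (d ^ 2)), ‖c‖ = 1 ∧ (U j)ᴴ = c • U a := by
    choose c idx hc hmul using hclose
    have hcne : ∀ i k, c i k ≠ 0 := by
      intro i k h
      have := hc i k; rw [h, norm_zero] at this; norm_num at this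
    have hred : ∀ b, U b = c j b • ((U j)ᴴ * U (idx j b)) := by
      intro b
      calc U b = ((U j)ᴴ * U j) * U b := by rw [hunit j, one_mul]
      _ = (U j)ᴴ * (U j * U b) := by rw [Matrix.mul_assoc]
      _ = (U j)ᴴ * (c j b • U (idx j b)) := by rw [hmul j b]
      _ = c j b • ((U j)ᴴ * U (idx j b)) := by rw [Matrix.mul_smul]
    have hinj : Function.Injective (idx j) := by
      intro a b hab
      by_contra hne
      have key : U a = (c j a * (c j b)⁻¹) • U b := by
        rw [hred a, hred b, hab, smul_smul]
        congr 1
        field_simp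
        rw [mul_div_assoc, div_self (hcne j b), mul_one]
      have h0 := linearIndependent_iff_eq_zero_of_smul_mem_span.mp hli a 1 (by
        rw [one_smul, key]
        exact Submodule.smul_mem _ _ (Submodule.subset_span
          ⟨b, ⟨Set.mem_univ b, fun hb => hne (Set.eq_of_mem_singleton hb).symm⟩, rfl⟩))
      norm_num at h0
    have hsurj : Function.Surjective (idx j) := Finite.surjective_of_injective hinj
    obtain ⟨a, ha⟩ := hsurj ⟨0, by positivity⟩
    refine ⟨(c j a)⁻¹, a, ?_, ?_⟩
    · rw [norm_inv, hc j a]; norm_num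
    · have h1 : U j * U a = c j a • U ⟨0, by positivity⟩ := by rw [← ha]; exact hmul j a
      rw [hU1] at h1
      have h2 : (U j)ᴴ * (U j * U a) = (U j)ᴴ * (c j a • 1) := by rw [h1]
      rw [← Matrix.mul_assoc, hunit j, one_mul, Matrix.mul_smul, mul_one] at h2
      rw [h2, smul_smul, inv_mul_cancel₀ (hcne j a), one_smul]
  obtain ⟨c0, a, hc0, hUjH⟩ := hz
  -- main computation on the U level
  have main : ∀ i k, ∃ (c : ℂ) (l : Fin (d ^ 2)), ‖c‖ = 1 ∧
      U i * (U j)ᴴ * U k = c • U l := by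
    intro i k
    obtain ⟨c1, m, hc1, h1⟩ := hclose i a
    obtain ⟨c2, l, hc2, h2⟩ := hclose m k
    refine ⟨c0 * c1 * c2, l, ?_, ?_⟩
    · simp [norm_mul, hc0, hc1, hc2]
    · rw [hUjH, Matrix.mul_smul, Matrix.smul_mul, h1, Matrix.smul_mul, h2,
        smul_smul, smul_smul, mul_assoc]
  -- scalar facts
  set s : ℂ := ((Real.sqrt d : ℝ) : ℂ) with hsdef
  have hs : s ^ 2 = (d : ℂ) := by
    rw [hsdef, ← Complex.ofReal_pow, Real.sq_sqrt (by positivity)]; norm_cast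
  have hsne : s ≠ 0 :=
    Complex.ofReal_ne_zero.mpr (ne_of_gt (Real.sqrt_pos.mpr (by exact_mod_cast hd)))
  have hdne : (d : ℂ) ≠ 0 := Nat.cast_ne_zero.mpr hd.ne'
  have hM' : ∀ i, M i = s⁻¹ • U i := fun i => by rw [hM]
  have hst : star s⁻¹ = s⁻¹ := by
    rw [hsdef]; simp [← Complex.ofReal_inv, Complex.star_def, Complex.conj_ofReal]
  have hMH : (M j)ᴴ = s⁻¹ • (U j)ᴴ := by
    rw [hM' j, Matrix.conjTranspose_smul, hst]
  have part1 : ∀ i k, ∃ (c : ℂ) (l : Fin (d ^ 2)), ‖c‖ = 1 ∧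
      M i * (M j)ᴴ * M k = (((d : ℂ))⁻¹ * c) • M l := by
    intro i k
    obtain ⟨c, l, hc, h⟩ := main i k
    refine ⟨c, l, hc, ?_⟩
    rw [hM' i, hM' k, hM' l, hMH]
    simp only [Matrix.smul_mul, Matrix.mul_smul, smul_smul]
    rw [h, smul_smul]
    congr 1
    have : (d : ℂ) = s ^ 2 := hs.symm
    rw [this]
    field_simp
  refine ⟨part1, ?_⟩
  have hmap : ((M j)ᵀ).map star = (M j)ᴴ := rfl
  choose c l hc h using part1
  exact ⟨l, fun i k => ⟨(d : ℂ)⁻¹ * c i k, by rw [hmap]; exact h i k⟩⟩
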